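/- The factor map π: Ω → ℤ₂ from the Thue-Morse subshift to the odometer has fibers of cardinality at most 4: for every z ∈ ℤ₂, the set π⁻¹(z) has at most 4 elements, and for z not in the ℤ-orbit of 0 it has exactly 2 elements. -/

import Mathlib

/-- Thue-Morse sequence: parity of number of 1s in binary expansion. -/
def tm (n : ℕ) : Fin 2 := Fin.ofNat 2 ((Nat.digits 2 n).count 1)

/-- Thue-Morse substitution on letters. -/
def zetaWord (a : Fin 2) : List (Fin 2) := [a, 1 - a]

/-- Thue-Morse substitution on words. -/
def zetaL (w : List (Fin 2)) : List (Fin 2) := w.flatMap zetaWord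

/-- Shift on bi-infinite sequences. -/
def shiftZ (w : ℤ → Fin 2) : ℤ → Fin 2 := fun n => w (n + 1)

/-- ζ on bi-infinite sequences: ζ(w)(2n)=w(n), ζ(w)(2n+1)=1-w(n). -/
def zetaZ (w : ℤ → Fin 2) : ℤ → Fin 2 :=
  fun n => if n % 2 = 0 then w (n / 2) else 1 - w (n / 2)

/-- `v` occurs as a factor of the bi-infinite word `w`. -/
def IsFactorZ (v : List (Fin 2)) (w : ℤ → Fin 2) : Prop :=
  ∃ i : ℤ, ∀ k : ℕ, k < v.length → w (i + k) = v.getD k 0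

/-- The Thue-Morse subshift: bi-infinite words all of whose factors occur in some ζⁿ(0). -/
def Omega : Set (ℤ → Fin 2) :=
  {w | ∀ v : List (Fin 2), IsFactorZ v w → ∃ n : ℕ, v <:+: zetaL^[n] [0]}

open Fin.NatCast

-- Fin 2 helpers
lemma f2_sub (x : Fin 2) : 1 - x = x + 1 := by revert x; decide
lemma f2_ne (x : Fin 2) : x ≠ 1 - x := by revert x; decide
lemma f2_subsub (x : Fin 2) : 1 - (1 - x) = x := by revert x; decide

lemma tm_zero : tm 0 = 0 := by simp [tm]
lemma tm_two_mul (n : ℕ) : tm (2 * n) = tm n := by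
  rcases Nat.eq_zero_or_pos n with h | h
  · simp [h]
  · unfold tm
    rw [Fin.ofNat_eq_cast, Fin.ofNat_eq_cast, Nat.digits_def' (by norm_num : 1 < 2) (by omega)]
    simp [Nat.mul_div_cancel_left _ (by norm_num : (0:ℕ) < 2), Nat.mul_mod_right]
lemma tm_two_mul_add_one (n : ℕ) : tm (2 * n + 1) = 1 - tm n := by
  unfold tm
  rw [Fin.ofNat_eq_cast, Fin.ofNat_eq_cast, Nat.digits_def' (by norm_num : 1 < 2) (by omega)]
  have h1 : (2 * n + 1) % 2 = 1 := by omega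
  have h2 : (2 * n + 1) / 2 = n := by omega
  rw [h1, h2, List.count_cons_self, f2_sub, Nat.cast_add, Nat.cast_one]

lemma f2_two : (1 : Fin 2) + 1 = 0 := by decide

lemma tm_block (m a j : ℕ) (hj : j < 2 ^ m) : tm (a * 2 ^ m + j) = tm a + tm j := by
  induction m generalizing j with
  | zero => interval_cases j; simp [tm_zero]
  | succ m ih =>
    rcases Nat.even_or_odd j with ⟨s, hs⟩ | ⟨s, hs⟩
    · have h1 : a * 2 ^ (m + 1) + j = 2 * (a * 2 ^ m + s) := by subst hs; ring
      have h2 : s < 2 ^ m := by omega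
      rw [h1, tm_two_mul, ih s h2, hs, ← two_mul, tm_two_mul]
    · have h1 : a * 2 ^ (m + 1) + j = 2 * (a * 2 ^ m + s) + 1 := by subst hs; ring
      have h2 : s < 2 ^ m := by omega
      rw [h1, tm_two_mul_add_one, f2_sub, ih s h2, hs, tm_two_mul_add_one, f2_sub]
      abel
lemma tm_reflect (n j : ℕ) (hj : j < 2 ^ n) : tm (2 ^ n - 1 - j) = tm j + (n : Fin 2) := by
  induction n generalizing j with
  | zero => interval_cases j; simp
  | succ n ih =>
    have hp : 2 ^ (n + 1) = 2 * 2 ^ n := by ring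
    rcases Nat.even_or_odd j with ⟨m, hm⟩ | ⟨m, hm⟩
    · have h2 : m < 2 ^ n := by omega
      have h1 : 2 ^ (n + 1) - 1 - j = 2 * (2 ^ n - 1 - m) + 1 := by omega
      rw [h1, tm_two_mul_add_one, f2_sub, ih m h2, hm, ← two_mul, tm_two_mul]
      push_cast
      abel
    · have h2 : m < 2 ^ n := by omega
      have h1 : 2 ^ (n + 1) - 1 - j = 2 * (2 ^ n - 1 - m) := by omega
      rw [h1, tm_two_mul, ih m h2, hm, tm_two_mul_add_one, f2_sub]
      push_cast
      generalize (n : Fin 2) = c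
      generalize tm m = a
      revert a c; decide
-- no triple in tm
lemma tm_no_triple (j : ℕ) : ¬(tm j = tm (j + 1) ∧ tm (j + 1) = tm (j + 2)) := by
  rintro ⟨h1, h2⟩
  rcases Nat.even_or_odd j with ⟨m, hm⟩ | ⟨m, hm⟩
  · subst hm
    rw [← two_mul, tm_two_mul, show 2 * m + 1 = 2 * m + 1 from rfl, tm_two_mul_add_one] at h1
    exact f2_ne _ h1
  · subst hm
    rw [show 2 * m + 1 + 1 = 2 * (m + 1) from by ring, tm_two_mul,
      show 2 * m + 1 + 2 = 2 * (m + 1) + 1 from by ring, tm_two_mul_add_one] at h2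
    exact f2_ne _ h2
-- squares in tm are at odd positions
lemma tm_square_odd (j : ℕ) (h : tm j = tm (j + 1)) : j % 2 = 1 := by
  rcases Nat.even_or_odd j with ⟨m, hm⟩ | ⟨m, hm⟩
  · exfalso; subst hm
    rw [← two_mul, tm_two_mul, show 2 * m + 1 = 2 * m + 1 from rfl, tm_two_mul_add_one] at h
    exact f2_ne _ h
  · omega
-- tm has a square in every window of length 5
lemma tm_square_exists (o : ℕ) : ∃ p, o ≤ p ∧ p ≤ o + 3 ∧ tm p = tm (p + 1) := by
  by_contra hc
  push_neg at hc
  have key : ∀ k, k ≤ 2 → tm (o + k) = tm (o + k + 2) := by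
    intro k hk
    have h1 := hc (o + k) (by omega) (by omega)
    have h2 := hc (o + k + 1) (by omega) (by omega)
    revert h1 h2
    have : o + k + 1 + 1 = o + k + 2 := by ring
    rw [this]
    generalize tm (o + k) = a, tm (o + k + 1) = b, tm (o + k + 2) = c
    revert a b c; decide
  rcases Nat.even_or_odd o with ⟨m, hm⟩ | ⟨m, hm⟩
  · have e1 := key 0 (by omega)
    have e2 := key 2 (by omega)
    rw [show o + 0 = 2 * m by omega, show 2 * m + 2 = 2 * (m + 1) by ring, tm_two_mul, tm_two_mul] at e1
    rw [show o + 2 = 2 * (m + 1) by omega, show 2 * (m + 1) + 2 = 2 * (m + 2) by ring, tm_two_mul, tm_two_mul] at e2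
    exact tm_no_triple m ⟨by simpa using e1, by simpa using e2⟩
  · have e1 := key 0 (by omega)
    have e2 := key 2 (by omega)
    rw [show o + 0 = 2 * m + 1 by omega, show 2 * m + 1 + 2 = 2 * (m + 1) + 1 by ring, tm_two_mul_add_one, tm_two_mul_add_one] at e1
    rw [show o + 2 = 2 * (m + 1) + 1 by omega, show 2 * (m + 1) + 1 + 2 = 2 * (m + 2) + 1 by ring, tm_two_mul_add_one, tm_two_mul_add_one] at e2
    have e1' : tm m = tm (m + 1) := by rw [← f2_subsub (tm m), e1, f2_subsub]
    have e2' : tm (m + 1) = tm (m + 2) := by rw [← f2_subsub (tm (m+1)), e2, f2_subsub]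
    exact tm_no_triple m ⟨e1', e2'⟩

-- List layer
lemma zetaL_length (w : List (Fin 2)) : (zetaL w).length = 2 * w.length := by
  induction w with
  | nil => rfl
  | cons a t ih => simp [zetaL, zetaWord] at ih ⊢; omega

lemma zetaL_getD_even (w : List (Fin 2)) (k : ℕ) (hk : k < w.length) :
    (zetaL w).getD (2 * k) 0 = w.getD k 0 := by
  induction w generalizing k with
  | nil => simp at hk
  | cons a t ih =>
    cases k with
    | zero => rfl
    | succ k =>
      have : 2 * (k + 1) = 2 * k + 1 + 1 := by ring
      rw [this]
      show (zetaL t).getD (2 * k) 0 = _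
      exact ih k (by simpa using hk)

lemma zetaL_getD_odd (w : List (Fin 2)) (k : ℕ) (hk : k < w.length) :
    (zetaL w).getD (2 * k + 1) 0 = 1 - w.getD k 0 := by
  induction w generalizing k with
  | nil => simp at hk
  | cons a t ih =>
    cases k with
    | zero => rfl
    | succ k =>
      have : 2 * (k + 1) + 1 = 2 * k + 1 + 1 + 1 := by ring
      rw [this]
      show (zetaL t).getD (2 * k + 1) 0 = _
      exact ih k (by simpa using hk)

lemma zetaL_append (a b : List (Fin 2)) : zetaL (a ++ b) = zetaL a ++ zetaL b :=
  List.flatMap_append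

lemma zetaL_infix {v u : List (Fin 2)} (h : v <:+: u) : zetaL v <:+: zetaL u := by
  obtain ⟨s, t, rfl⟩ := h
  exact ⟨zetaL s, zetaL t, by rw [← zetaL_append, ← zetaL_append]⟩

lemma zetaL_iter_infix (n : ℕ) {v u : List (Fin 2)} (h : v <:+: u) :
    zetaL^[n] v <:+: zetaL^[n] u := by
  induction n generalizing v u with
  | zero => exact h
  | succ n ih => rw [Function.iterate_succ_apply, Function.iterate_succ_apply]
                 exact ih (zetaL_infix h)

lemma zetaL_iter_length (n : ℕ) : (zetaL^[n] [0]).length = 2 ^ n := by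
  induction n with
  | zero => rfl
  | succ n ih => rw [Function.iterate_succ_apply', zetaL_length, ih]; ring

lemma zetaL_iter_getD (n j : ℕ) (hj : j < 2 ^ n) :
    (zetaL^[n] [0]).getD j 0 = tm j := by
  induction n generalizing j with
  | zero => interval_cases j; simp [tm_zero]
  | succ n ih =>
    rw [Function.iterate_succ_apply']
    rcases Nat.even_or_odd j with ⟨m, hm⟩ | ⟨m, hm⟩
    · have hm' : j = 2 * m := by omega
      have h2 : m < 2 ^ n := by omega
      rw [hm', zetaL_getD_even _ _ (by rw [zetaL_iter_length]; omega), ih m h2, tm_two_mul]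
    · have h2 : m < 2 ^ n := by omega
      rw [hm, zetaL_getD_odd _ _ (by rw [zetaL_iter_length]; omega), ih m h2, tm_two_mul_add_one]

lemma infix_of_getD (v u : List (Fin 2)) (o : ℕ) (hlen : o + v.length ≤ u.length)
    (h : ∀ k, k < v.length → v.getD k 0 = u.getD (o + k) 0) : v <:+: u := by
  have hv : v = (u.drop o).take v.length := by
    apply List.ext_getElem
    · rw [List.length_take, List.length_drop]; omega
    · intro k h1 h2
      have hk : k < v.length := h1
      have : v.getD k 0 = ((u.drop o).take v.length).getD k 0 := by
        rw [h k hk, List.getD_eq_getElem _ _ (by omega),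
          List.getD_eq_getElem _ _ h2]
        simp [List.getElem_take, List.getElem_drop]
      rwa [List.getD_eq_getElem _ _ h1, List.getD_eq_getElem _ _ h2] at this
  rw [hv]
  exact ((List.take_prefix _ _).isInfix).trans (List.drop_suffix o u).isInfix

lemma getD_of_infix (v u : List (Fin 2)) (h : v <:+: u) :
    ∃ o, o + v.length ≤ u.length ∧ ∀ k, k < v.length → v.getD k 0 = u.getD (o + k) 0 := by
  obtain ⟨s, t, rfl⟩ := h
  refine ⟨s.length, by simp, fun k hk => ?_⟩
  rw [List.getD_eq_getElem _ _ hk,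
    List.getD_eq_getElem _ _ (by simp; omega)]
  rw [List.getElem_append_left (by simp; omega), List.getElem_append_right (by omega)]
  simp


lemma tm_one : tm 1 = 1 := by
  have := tm_two_mul_add_one 0; simpa [tm_zero] using this

/-- every window of an element of Omega is a tm-window -/
lemma window_tm {w : ℤ → Fin 2} (hw : w ∈ Omega) (i : ℤ) (L : ℕ) :
    ∃ o : ℕ, ∀ k : ℕ, k < L → w (i + k) = tm (o + k) := by
  set v : List (Fin 2) := List.ofFn (fun k : Fin L => w (i + k)) with hv
  have hlen : v.length = L := by simp [hv]
  have hfac : IsFactorZ v w := by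
    refine ⟨i, fun k hk => ?_⟩
    rw [hlen] at hk
    rw [List.getD_eq_getElem _ _ (by omega)]
    simp [hv]
  obtain ⟨n, hinf⟩ := hw v hfac
  obtain ⟨o, holen, hod⟩ := getD_of_infix v _ hinf
  rw [zetaL_iter_length] at holen
  refine ⟨o, fun k hk => ?_⟩
  have h1 := hod k (by omega)
  rw [zetaL_iter_getD n (o + k) (by omega)] at h1
  rw [← h1, List.getD_eq_getElem _ _ (by omega)]
  simp [hv]

/-- a tm-window is a factor of some ζⁿ(0) -/
lemma factor_of_tm_window (v : List (Fin 2)) (r : ℕ)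
    (h : ∀ k, k < v.length → v.getD k 0 = tm (r + k)) : ∃ n, v <:+: zetaL^[n] [0] := by
  refine ⟨r + v.length, infix_of_getD v _ r ?_ ?_⟩
  · rw [zetaL_iter_length]
    exact le_of_lt Nat.lt_two_pow_self
  · intro k hk
    rw [h k hk, zetaL_iter_getD _ _ (by have := Nat.lt_two_pow_self (n := r + v.length); omega)]

lemma omega_square_parity {w : ℤ → Fin 2} (hw : w ∈ Omega) {i j : ℤ}
    (hi : w i = w (i + 1)) (hj : w j = w (j + 1)) : i % 2 = j % 2 := by
  have main : ∀ i j : ℤ, i ≤ j → w i = w (i + 1) → w j = w (j + 1) → i % 2 = j % 2 := by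
    intro i j hij hi hj
    set d : ℕ := (j - i).toNat with hd
    have hdj : j = i + d := by omega
    obtain ⟨o, hwin⟩ := window_tm hw i (d + 2)
    have e0 : w i = tm o := by
      have := hwin 0 (by omega); simpa using this
    have e1 : w (i + 1) = tm (o + 1) := by
      have := hwin 1 (by omega); simpa using this
    have ed : w (i + d) = tm (o + d) := hwin d (by omega)
    have ed1 : w (i + d + 1) = tm (o + d + 1) := by
      have h := hwin (d + 1) (by omega)
      push_cast at h
      rw [← add_assoc, ← add_assoc] at h
      exact h
    have p1 : o % 2 = 1 := tm_square_odd o (by rw [← e0, ← e1, hi])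
    have p2 : (o + d) % 2 = 1 := by
      apply tm_square_odd
      rw [← ed, ← ed1]
      rw [hdj] at hj
      exact hj
    omega
  rcases le_total i j with h | h
  · exact main i j h hi hj
  · exact (main j i h hj hi).symm

lemma omega_square_exists {w : ℤ → Fin 2} (hw : w ∈ Omega) (i : ℤ) :
    ∃ p : ℤ, i ≤ p ∧ p ≤ i + 3 ∧ w p = w (p + 1) := by
  obtain ⟨o, hwin⟩ := window_tm hw i 5
  obtain ⟨p', h1, h2, h3⟩ := tm_square_exists o
  set k : ℕ := p' - o with hk
  have hkk : p' = o + k := by omega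
  refine ⟨i + k, by omega, by omega, ?_⟩
  have ha := hwin k (by omega)
  have hb := hwin (k + 1) (by omega)
  push_cast at hb
  rw [← add_assoc, ← add_assoc] at hb
  rw [hkk] at h3
  exact ha.trans (h3.trans hb.symm)

/-- block offset: 1 if blocks start at odd positions -/
def bz (w : ℤ → Fin 2) : ℕ :=
  if w 0 = w 1 then 1 else if w 1 = w 2 then 0 else if w 2 = w 3 then 1 else 0

def Dz (w : ℤ → Fin 2) : ℤ → Fin 2 := fun n => w (2 * n - bz w)

lemma bz_le (w : ℤ → Fin 2) : bz w ≤ 1 := by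
  unfold bz; split_ifs <;> omega

lemma f2_of_ne {x y : Fin 2} (h : x ≠ y) : y = 1 - x := by
  revert h; revert x y; decide

lemma bz_square {w : ℤ → Fin 2} (hw : w ∈ Omega) {i : ℤ} (hi : w i = w (i + 1)) :
    (bz w : ℤ) + i % 2 = 1 := by
  unfold bz
  split_ifs with h0 h1 h2
  · have := omega_square_parity hw hi (show w 0 = w (0 + 1) by norm_num; exact h0)
    omega
  · have := omega_square_parity hw hi (show w 1 = w (1 + 1) by norm_num; exact h1)
    omega
  · have := omega_square_parity hw hi (show w 2 = w (2 + 1) by norm_num; exact h2)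
    omega
  · obtain ⟨p, hp1, hp2, hp3⟩ := omega_square_exists hw 0
    interval_cases p
    · exact absurd (by norm_num at hp3; exact hp3) h0
    · exact absurd (by norm_num at hp3; exact hp3) h1
    · exact absurd (by norm_num at hp3; exact hp3) h2
    · have := omega_square_parity hw hi hp3
      omega

lemma no_square_block {w : ℤ → Fin 2} (hw : w ∈ Omega) (m : ℤ) :
    w (2 * m - bz w) ≠ w (2 * m - bz w + 1) := by
  intro h
  have := bz_square hw h
  have hb := bz_le w
  omega

lemma desub_eq {w : ℤ → Fin 2} (hw : w ∈ Omega) (n : ℤ) :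
    w n = zetaZ (Dz w) (n + bz w) := by
  unfold zetaZ Dz
  set m : ℤ := n + bz w with hm
  have hb := bz_le w
  by_cases hpar : m % 2 = 0
  · rw [if_pos hpar]
    have : 2 * (m / 2) - bz w = n := by omega
    rw [this]
  · rw [if_neg hpar]
    have h2 : 2 * (m / 2) - bz w = n - 1 := by omega
    rw [h2]
    have hne : w (n - 1) ≠ w n := by
      intro h
      have h' : w (n - 1) = w ((n - 1) + 1) := by
        rw [show (n - 1) + 1 = n by ring]; exact h
      have := bz_square hw h'
      omega
    exact f2_of_ne hne

lemma Dz_mem {w : ℤ → Fin 2} (hw : w ∈ Omega) : Dz w ∈ Omega := by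
  rintro v' ⟨i, hv⟩
  set L := v'.length with hL
  set i0 : ℤ := 2 * i - bz w with hi0
  obtain ⟨o, hwin⟩ := window_tm hw i0 (2 * L + 5)
  obtain ⟨p, hp1, hp2, hp3⟩ := omega_square_exists hw i0
  set j : ℕ := (p - i0).toNat with hjdef
  have hj : (p : ℤ) = i0 + (j : ℤ) ∧ j ≤ 3 := by omega
  have e1 : w (i0 + (j : ℤ)) = tm (o + j) := hwin j (by omega)
  have e2 : w (i0 + ((j + 1 : ℕ) : ℤ)) = tm (o + (j + 1)) := hwin (j + 1) (by omega)
  have hsq : tm (o + j) = tm (o + j + 1) := by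
    rw [← e1]
    have : i0 + ((j + 1 : ℕ) : ℤ) = p + 1 := by push_cast; omega
    rw [this] at e2
    rw [← hj.1, hp3, e2]
    ring_nf
  have podd : (o + j) % 2 = 1 := tm_square_odd _ hsq
  have pbz : (bz w : ℤ) + p % 2 = 1 := bz_square hw hp3
  have hble := bz_le w
  have hoeven : o % 2 = 0 := by omega
  set r : ℕ := o / 2 with hr
  have hor : o = 2 * r := by omega
  apply factor_of_tm_window v' r
  intro k hk
  have hDk := hv k hk
  have hwk : Dz w (i + (k : ℤ)) = w (i0 + ((2 * k : ℕ) : ℤ)) := by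
    unfold Dz
    congr 1
    push_cast
    ring
  have := hwin (2 * k) (by omega)
  rw [← hDk, hwk, this, hor, show 2 * r + 2 * k = 2 * (r + k) by ring, tm_two_mul]

lemma shiftZ_mem {w : ℤ → Fin 2} (hw : w ∈ Omega) : shiftZ w ∈ Omega := by
  rintro v ⟨i, hv⟩
  refine hw v ⟨i + 1, fun k hk => ?_⟩
  rw [← hv k hk]
  unfold shiftZ
  congr 1
  ring

def ushiftZ (w : ℤ → Fin 2) : ℤ → Fin 2 := fun n => w (n - 1)

lemma ushiftZ_mem {w : ℤ → Fin 2} (hw : w ∈ Omega) : ushiftZ w ∈ Omega := by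
  rintro v ⟨i, hv⟩
  refine hw v ⟨i - 1, fun k hk => ?_⟩
  rw [← hv k hk]
  unfold ushiftZ
  congr 1
  ring

lemma shiftZ_ushiftZ (w : ℤ → Fin 2) : shiftZ (ushiftZ w) = w := by
  funext n; unfold shiftZ ushiftZ; congr 1; ring

def Kc (w : ℤ → Fin 2) : ℤ → Fin 2 := fun n => 1 - w n

lemma zetaL_map (l : List (Fin 2)) : zetaL (l.map (fun x => 1 - x)) = (zetaL l).map (fun x => 1 - x) := by
  induction l with
  | nil => rfl
  | cons a t ih => simp [zetaL, zetaWord] at ih ⊢; exact ih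

lemma zetaL_iter_map (n : ℕ) (l : List (Fin 2)) :
    zetaL^[n] (l.map (fun x => 1 - x)) = (zetaL^[n] l).map (fun x => 1 - x) := by
  induction n generalizing l with
  | zero => rfl
  | succ n ih =>
    rw [Function.iterate_succ_apply, Function.iterate_succ_apply, zetaL_map, ih]

lemma zetaL_iter_append (n : ℕ) (a b : List (Fin 2)) :
    zetaL^[n] (a ++ b) = zetaL^[n] a ++ zetaL^[n] b := by
  induction n generalizing a b with
  | zero => rfl
  | succ n ih =>
    rw [Function.iterate_succ_apply, Function.iterate_succ_apply,
      Function.iterate_succ_apply, zetaL_append, ih]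

lemma Kc_mem {w : ℤ → Fin 2} (hw : w ∈ Omega) : Kc w ∈ Omega := by
  rintro v ⟨i, hv⟩
  have hfac : IsFactorZ (v.map (fun x => 1 - x)) w := by
    refine ⟨i, fun k hk => ?_⟩
    rw [List.length_map] at hk
    rw [List.getD_eq_getElem _ _ (by simpa using hk), List.getElem_map]
    rw [← List.getD_eq_getElem _ (0 : Fin 2) hk, ← hv k hk]
    unfold Kc
    rw [f2_subsub]
  obtain ⟨n, hinf⟩ := hw _ hfac
  refine ⟨n + 1, ?_⟩
  have h1 : v = (v.map (fun x => 1 - x)).map (fun x => 1 - x) := by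
    rw [List.map_map]
    have : ((fun x : Fin 2 => 1 - x) ∘ fun x => 1 - x) = id := funext f2_subsub
    rw [this, List.map_id]
  rw [h1]
  have h2 := hinf.map (fun x : Fin 2 => 1 - x)
  rw [← zetaL_iter_map] at h2
  have h3 : (zetaL^[n] (([0] : List (Fin 2)).map (fun x => 1 - x))) <:+: zetaL^[n+1] [0] := by
    have : zetaL^[n+1] [0] = zetaL^[n] (zetaL [0]) := Function.iterate_succ_apply zetaL n [0]
    rw [this, show zetaL [0] = [0, 1] from rfl, show ([0,1] : List (Fin 2)) = [0] ++ [1] from rfl,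
      zetaL_iter_append]
    have : (([0] : List (Fin 2)).map (fun x => 1 - x)) = [1] := rfl
    rw [this]
    exact (List.suffix_append _ _).isInfix
  exact h2.trans h3

lemma f2_one_sub_add (a b : Fin 2) : 1 - (a + b) = a + (1 - b) := by revert a b; decide

lemma zetaZ_iter (k : ℕ) (u : ℤ → Fin 2) (q : ℤ) (r : ℕ) (hr : r < 2 ^ k) :
    zetaZ^[k] u ((2 ^ k : ℤ) * q + (r : ℤ)) = u q + tm r := by
  induction k generalizing r with
  | zero =>
    interval_cases r
    simp [tm_zero]
  | succ k ih =>
    rw [Function.iterate_succ_apply']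
    rcases Nat.even_or_odd r with ⟨s, hs⟩ | ⟨s, hs⟩
    · have hr' : r = 2 * s := by omega
      have hs2 : s < 2 ^ k := by omega
      set m : ℤ := (2 ^ (k+1) : ℤ) * q + (r : ℤ) with hm
      have hme : m = 2 * ((2 ^ k : ℤ) * q + (s : ℤ)) := by rw [hm, hr']; push_cast; ring
      have hz : zetaZ (zetaZ^[k] u) m = if m % 2 = 0 then zetaZ^[k] u (m / 2) else 1 - zetaZ^[k] u (m / 2) := rfl
      rw [hz, if_pos (by omega), show m / 2 = (2 ^ k : ℤ) * q + (s : ℤ) by omega]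
      rw [ih s hs2, hr', tm_two_mul]
    · have hs2 : s < 2 ^ k := by omega
      set m : ℤ := (2 ^ (k+1) : ℤ) * q + (r : ℤ) with hm
      have hme : m = 2 * ((2 ^ k : ℤ) * q + (s : ℤ)) + 1 := by rw [hm, hs]; push_cast; ring
      have hz : zetaZ (zetaZ^[k] u) m = if m % 2 = 0 then zetaZ^[k] u (m / 2) else 1 - zetaZ^[k] u (m / 2) := rfl
      rw [hz, if_neg (by omega), show m / 2 = (2 ^ k : ℤ) * q + (s : ℤ) by omega]
      rw [ih s hs2, hs, tm_two_mul_add_one, f2_one_sub_add]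

lemma zetaZ_shift (c : ℤ) (v : ℤ → Fin 2) :
    zetaZ (fun n => v (n + c)) = fun n => zetaZ v (n + 2 * c) := by
  funext n
  unfold zetaZ
  have h1 : (n + 2 * c) % 2 = n % 2 := by omega
  have h2 : (n + 2 * c) / 2 = n / 2 + c := by omega
  rw [h1, h2]

lemma zetaZ_iter_shift (k : ℕ) (c : ℤ) (v : ℤ → Fin 2) :
    zetaZ^[k] (fun n => v (n + c)) = fun n => zetaZ^[k] v (n + 2 ^ k * c) := by
  induction k generalizing v c with
  | zero => simp
  | succ k ih =>
    rw [Function.iterate_succ_apply, Function.iterate_succ_apply, zetaZ_shift, ih]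
    funext n
    congr 1
    push_cast
    ring

def bseq (w : ℤ → Fin 2) (k : ℕ) : ℕ := bz (Dz^[k] w)
def mzf (w : ℤ → Fin 2) (k : ℕ) : ℕ := ∑ j ∈ Finset.range k, bseq w j * 2 ^ j

lemma Dz_iter_mem {w : ℤ → Fin 2} (hw : w ∈ Omega) (k : ℕ) : Dz^[k] w ∈ Omega := by
  induction k with
  | zero => exact hw
  | succ k ih => rw [Function.iterate_succ_apply']; exact Dz_mem ih

lemma bseq_le (w : ℤ → Fin 2) (k : ℕ) : bseq w k ≤ 1 := bz_le _

lemma mzf_lt (w : ℤ → Fin 2) (k : ℕ) : mzf w k < 2 ^ k := by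
  induction k with
  | zero => simp [mzf]
  | succ k ih =>
    have hb := bseq_le w k
    have : mzf w (k + 1) = mzf w k + bseq w k * 2 ^ k := Finset.sum_range_succ _ _
    rw [this]
    have : 2 ^ (k + 1) = 2 ^ k + 2 ^ k := by ring
    nlinarith

lemma tower {w : ℤ → Fin 2} (hw : w ∈ Omega) (k : ℕ) (n : ℤ) :
    w n = zetaZ^[k] (Dz^[k] w) (n + (mzf w k : ℤ)) := by
  induction k with
  | zero => simp [mzf]
  | succ k ih =>
    have hmem : Dz^[k] w ∈ Omega := Dz_iter_mem hw k
    have hsub : Dz^[k] w = fun n' => zetaZ (Dz^[k+1] w) (n' + (bseq w k : ℤ)) := by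
      funext n'
      rw [Function.iterate_succ_apply']
      exact desub_eq hmem n'
    rw [ih, hsub, show (fun n' => zetaZ (Dz^[k+1] w) (n' + (bseq w k : ℤ)))
        = (fun n' => (zetaZ (Dz^[k+1] w)) (n' + (bseq w k : ℤ))) from rfl,
      zetaZ_iter_shift k _ _]
    rw [show zetaZ^[k+1] (Dz^[k+1] w) = zetaZ^[k] (zetaZ (Dz^[k+1] w)) from
      Function.iterate_succ_apply zetaZ k _]
    congr 1
    have : mzf w (k+1) = mzf w k + bseq w k * 2 ^ k := Finset.sum_range_succ _ _
    rw [this]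
    push_cast
    ring

lemma fiber_window {w : ℤ → Fin 2} (hw : w ∈ Omega) (k : ℕ) (q : ℤ) (r : ℕ) (hr : r < 2 ^ k) :
    w ((2 ^ k : ℤ) * q + (r : ℤ) - (mzf w k : ℤ)) = Dz^[k] w q + tm r := by
  rw [tower hw k, show (2 ^ k : ℤ) * q + (r : ℤ) - (mzf w k : ℤ) + (mzf w k : ℤ)
      = (2 ^ k : ℤ) * q + (r : ℤ) by ring]
  exact zetaZ_iter k _ q r hr

lemma bz_shift {w : ℤ → Fin 2} (hw : w ∈ Omega) : (bz (shiftZ w) : ℤ) = 1 - bz w := by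
  obtain ⟨p, _, _, hp3⟩ := omega_square_exists hw 0
  have h1 : (bz w : ℤ) + p % 2 = 1 := bz_square hw hp3
  have h2 : shiftZ w (p - 1) = shiftZ w ((p - 1) + 1) := by
    show w (p - 1 + 1) = w (p - 1 + 1 + 1)
    rw [show p - 1 + 1 = p by ring]
    exact hp3
  have h3 : (bz (shiftZ w) : ℤ) + (p - 1) % 2 = 1 := bz_square (shiftZ_mem hw) h2
  have b1 := bz_le w
  have b2 := bz_le (shiftZ w)
  omega

lemma Dz_shift_zero {w : ℤ → Fin 2} (hw : w ∈ Omega) (h : bz w = 0) :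
    Dz (shiftZ w) = Dz w := by
  funext n
  have hb : (bz (shiftZ w) : ℤ) = 1 := by rw [bz_shift hw, h]; ring
  show shiftZ w (2 * n - bz (shiftZ w)) = w (2 * n - bz w)
  show w (2 * n - bz (shiftZ w) + 1) = w (2 * n - bz w)
  congr 1
  rw [hb, h]
  push_cast
  ring

lemma Dz_shift_one {w : ℤ → Fin 2} (hw : w ∈ Omega) (h : bz w = 1) :
    Dz (shiftZ w) = shiftZ (Dz w) := by
  funext n
  have hb : (bz (shiftZ w) : ℤ) = 0 := by rw [bz_shift hw, h]; ring
  show shiftZ w (2 * n - bz (shiftZ w)) = Dz w (n + 1)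
  show w (2 * n - bz (shiftZ w) + 1) = w (2 * (n + 1) - bz w)
  congr 1
  rw [hb, h]
  push_cast
  ring

noncomputable def piTM (w : ℤ → Fin 2) : ℤ_[2] := ∑' k, (bseq w k : ℤ_[2]) * 2 ^ k

lemma norm_two_pow (k : ℕ) : ‖((2 : ℤ_[2])) ^ k‖ = (1 / 2 : ℝ) ^ k := by
  have h : ((2 : ℕ) : ℤ_[2]) = (2 : ℤ_[2]) := by push_cast; ring
  rw [← h, PadicInt.norm_p_pow]
  rw [zpow_neg, ← zpow_natCast]
  simp [one_div, inv_pow]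
lemma norm_two_pow_le (k : ℕ) : ‖((2 : ℤ_[2])) ^ k‖ ≤ (1 / 2 : ℝ) ^ k := le_of_eq (norm_two_pow k)

lemma summable_aux (c : ℕ → ℤ_[2]) : Summable (fun k => c k * 2 ^ k) := by
  apply Summable.of_norm_bounded (g := fun k => (1 / 2 : ℝ) ^ k)
  · exact summable_geometric_of_lt_one (by norm_num) (by norm_num)
  · intro k
    calc ‖c k * 2 ^ k‖ ≤ ‖c k‖ * ‖(2 : ℤ_[2]) ^ k‖ := norm_mul_le _ _
      _ ≤ 1 * (1 / 2 : ℝ) ^ k := by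
          apply mul_le_mul (PadicInt.norm_le_one _) (norm_two_pow_le k) (norm_nonneg _) zero_le_one
      _ = (1 / 2 : ℝ) ^ k := one_mul _

lemma pi_split (w : ℤ → Fin 2) (k : ℕ) :
    piTM w = (mzf w k : ℤ_[2]) + 2 ^ k * ∑' j, (bseq w (j + k) : ℤ_[2]) * 2 ^ j := by
  unfold piTM
  rw [← Summable.sum_add_tsum_nat_add k (summable_aux _)]
  congr 1
  · unfold mzf; push_cast; ring_nf
  · rw [← Summable.tsum_mul_left _ (summable_aux (fun j => (bseq w (j + k) : ℤ_[2])))]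
    apply tsum_congr
    intro j
    rw [pow_add]
    ring

lemma pi_dist (w : ℤ → Fin 2) (k : ℕ) :
    ‖piTM w - (mzf w k : ℤ_[2])‖ ≤ (1 / 2 : ℝ) ^ k := by
  rw [pi_split w k, add_sub_cancel_left]
  calc ‖(2:ℤ_[2]) ^ k * _‖ ≤ ‖(2:ℤ_[2]) ^ k‖ * ‖_‖ := norm_mul_le _ _
    _ ≤ (1/2:ℝ) ^ k * 1 := mul_le_mul (norm_two_pow_le k) (PadicInt.norm_le_one _) (norm_nonneg _) (by positivity)
    _ = (1/2:ℝ) ^ k := mul_one _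

lemma bseq_succ (w : ℤ → Fin 2) (k : ℕ) : bseq w (k + 1) = bseq (Dz w) k := by
  unfold bseq
  rw [Function.iterate_succ_apply]

lemma pi_rec (w : ℤ → Fin 2) : piTM w = (bseq w 0 : ℤ_[2]) + 2 * piTM (Dz w) := by
  rw [pi_split w 1]
  have h1 : (mzf w 1 : ℤ_[2]) = (bseq w 0 : ℤ_[2]) := by unfold mzf; simp
  have h2 : piTM (Dz w) = ∑' j, (bseq w (j + 1) : ℤ_[2]) * 2 ^ j := by
    unfold piTM
    exact (tsum_congr fun j => by rw [bseq_succ]).symm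
  rw [h1, h2, pow_one]

lemma pi_shift {w : ℤ → Fin 2} (hw : w ∈ Omega) : piTM (shiftZ w) = piTM w + 1 := by
  have key : ∀ k : ℕ, ∀ w : ℤ → Fin 2, w ∈ Omega →
      ‖piTM (shiftZ w) - piTM w - 1‖ ≤ (1 / 2 : ℝ) ^ k := by
    intro k
    induction k with
    | zero =>
      intro w hw
      simp only [pow_zero]
      calc ‖piTM (shiftZ w) - piTM w - 1‖ = ‖piTM (shiftZ w) + (- piTM w - 1)‖ := by ring_nf
        _ ≤ max ‖piTM (shiftZ w)‖ ‖- piTM w - 1‖ := PadicInt.nonarchimedean _ _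
        _ ≤ 1 := max_le (PadicInt.norm_le_one _) (PadicInt.norm_le_one _)
    | succ k ih =>
      intro w hw
      have hble := bz_le w
      have hb0 : bseq w 0 = bz w := rfl
      have hbs0 : bseq (shiftZ w) 0 = bz (shiftZ w) := rfl
      interval_cases hb : (bz w)
      · have hD : Dz (shiftZ w) = Dz w := Dz_shift_zero hw hb
        have hbz1 : (bz (shiftZ w) : ℤ) = 1 := by rw [bz_shift hw, hb]; ring
        have hbz1' : bz (shiftZ w) = 1 := by omega
        have e1 : piTM (shiftZ w) = 1 + 2 * piTM (Dz w) := by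
          rw [pi_rec, hbs0, hbz1', hD]; norm_num
        have e2 : piTM w = 2 * piTM (Dz w) := by
          rw [pi_rec, hb0]; norm_num
        rw [e1, e2, show (1 : ℤ_[2]) + 2 * piTM (Dz w) - 2 * piTM (Dz w) - 1 = 0 by ring]
        simpa using pow_nonneg (by norm_num : (0:ℝ) ≤ 1/2) (k+1)
      · have hD : Dz (shiftZ w) = shiftZ (Dz w) := Dz_shift_one hw hb
        have hbz0 : (bz (shiftZ w) : ℤ) = 0 := by rw [bz_shift hw, hb]; ring
        have hbz0' : bz (shiftZ w) = 0 := by omega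
        have e1 : piTM (shiftZ w) = 2 * piTM (shiftZ (Dz w)) := by
          rw [pi_rec, hbs0, hbz0', hD]; norm_num
        have e2 : piTM w = 1 + 2 * piTM (Dz w) := by
          rw [pi_rec, hb0]; norm_num
        have hM : piTM (shiftZ w) - piTM w - 1
            = 2 * (piTM (shiftZ (Dz w)) - piTM (Dz w) - 1) := by
          rw [e1, e2]; ring
        rw [hM]
        calc ‖(2:ℤ_[2]) * _‖ ≤ ‖(2:ℤ_[2])‖ * ‖_‖ := norm_mul_le _ _
          _ ≤ (1/2 : ℝ) * (1/2) ^ k := by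
              apply mul_le_mul _ (ih (Dz w) (Dz_mem hw)) (norm_nonneg _) (by norm_num)
              have := norm_two_pow 1
              simpa using le_of_eq this
          _ = (1/2 : ℝ) ^ (k + 1) := by ring
  have h0 : ‖piTM (shiftZ w) - piTM w - 1‖ ≤ 0 := by
    apply ge_of_tendsto' (tendsto_pow_atTop_nhds_zero_of_lt_one (by norm_num : (0:ℝ) ≤ 1/2) (by norm_num))
    intro k
    exact key k w hw
  have : piTM (shiftZ w) - piTM w - 1 = 0 := by
    rwa [← norm_le_zero_iff]
  linear_combination this

lemma continuous_of_findep {α : Type*} [TopologicalSpace α] (s : Finset ℤ)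
    (f : (ℤ → Fin 2) → α)
    (h : ∀ v w : ℤ → Fin 2, (∀ i ∈ s, v i = w i) → f v = f w) : Continuous f := by
  have hd : DiscreteTopology ({ i // i ∈ s } → Fin 2) := Pi.discreteTopology
  let g : ({ i // i ∈ s } → Fin 2) → α := fun u => f (fun i => if hi : i ∈ s then u ⟨i, hi⟩ else 0)
  have hfg : f = g ∘ (fun w (i : { i // i ∈ s }) => w i.1) := by
    funext w
    refine (h _ w fun i hi => ?_).symm
    simp only [dif_pos hi]
  rw [hfg]
  exact (continuous_of_discreteTopology).comp (continuous_pi fun i => continuous_apply _)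

lemma Dz_iter_agree (j : ℕ) (v w : ℤ → Fin 2) (M : ℕ)
    (h : ∀ i : ℤ, i.natAbs ≤ 2 ^ j * (M + 5) - 1 → v i = w i) :
    ∀ n : ℤ, n.natAbs ≤ M → Dz^[j] v n = Dz^[j] w n := by
  induction j generalizing v w M with
  | zero =>
    intro n hn
    apply h n
    have h1 : (2:ℕ) ^ 0 = 1 := pow_zero 2
    omega
  | succ j ih =>
    intro n hn
    rw [Function.iterate_succ_apply, Function.iterate_succ_apply]
    set P : ℕ := 2 ^ j * (M + 5) with hP
    have hP1 : 0 < P := by rw [hP]; positivity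
    have hP2 : 2 ^ (j + 1) * (M + 5) = 2 * P := by rw [hP]; ring
    have hP5 : M + 5 ≤ P := by rw [hP]; exact Nat.le_mul_of_pos_left _ (by positivity)
    have hsmall : ∀ i : ℤ, i.natAbs ≤ 3 → v i = w i := by
      intro i hi
      exact h i (by omega)
    have hbz : bz v = bz w := by
      unfold bz
      rw [hsmall 0 (by omega), hsmall 1 (by omega), hsmall 2 (by omega), hsmall 3 (by omega)]
    apply ih (Dz v) (Dz w) M _ n hn
    intro i hi
    show v (2 * i - bz v) = w (2 * i - bz w)
    rw [hbz]
    apply h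
    have hb := bz_le w
    omega

lemma continuous_bseq (k : ℕ) : Continuous (fun w => (bseq w k : ℤ_[2])) := by
  set B : ℕ := 2 ^ k * 9 - 1 with hB
  apply continuous_of_findep (Finset.Icc (-(B : ℤ)) B)
  intro v w h
  have hagree : ∀ i : ℤ, i.natAbs ≤ 2 ^ k * (4 + 5) - 1 → v i = w i := by
    intro i hi
    apply h
    rw [Finset.mem_Icc]
    omega
  have hD := Dz_iter_agree k v w 4 hagree
  have e : ∀ i : ℤ, i.natAbs ≤ 4 → Dz^[k] v i = Dz^[k] w i := hD
  have : bseq v k = bseq w k := by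
    unfold bseq bz
    rw [e 0 (by omega), e 1 (by omega), e 2 (by omega), e 3 (by omega)]
  rw [this]

lemma continuous_mzf (k : ℕ) : Continuous (fun w => (mzf w k : ℤ_[2])) := by
  have : (fun w => (mzf w k : ℤ_[2]))
      = fun w => ∑ j ∈ Finset.range k, (bseq w j : ℤ_[2]) * 2 ^ j := by
    funext w
    unfold mzf
    push_cast
    ring_nf
  rw [this]
  apply continuous_finset_sum
  intro j _
  exact (continuous_bseq j).mul continuous_const

lemma continuous_piTM : Continuous piTM := by
  have hU : TendstoUniformly (fun (k : ℕ) (w : ℤ → Fin 2) => ((mzf w k : ℤ_[2]))) piTM Filter.atTop := by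
    rw [Metric.tendstoUniformly_iff]
    intro ε hε
    obtain ⟨K, hK⟩ := exists_pow_lt_of_lt_one hε (by norm_num : (1/2 : ℝ) < 1)
    rw [Filter.eventually_atTop]
    refine ⟨K, fun k hk w => ?_⟩
    have h1 : dist (piTM w) ((mzf w k : ℤ_[2])) ≤ (1/2 : ℝ) ^ k := by
      rw [dist_eq_norm]
      exact pi_dist w k
    calc dist (piTM w) ((mzf w k : ℤ_[2])) ≤ (1/2 : ℝ) ^ k := h1
      _ ≤ (1/2 : ℝ) ^ K := by
          apply pow_le_pow_of_le_one (by norm_num) (by norm_num) hk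
      _ < ε := hK
  exact hU.continuous (Filter.Eventually.of_forall continuous_mzf).frequently

lemma isClosed_Omega : IsClosed Omega := by
  have heq : Omega = ⋂ (v : {v : List (Fin 2) // ¬ ∃ n, v <:+: zetaL^[n] [0]}),
      {w : ℤ → Fin 2 | ¬ IsFactorZ v.1 w} := by
    ext w
    constructor
    · intro hw
      rw [Set.mem_iInter]
      rintro ⟨v, hv⟩
      exact fun hf => hv (hw v hf)
    · intro hw v hf
      by_contra hn
      exact (Set.mem_iInter.mp hw ⟨v, hn⟩) hf
  rw [heq]
  apply isClosed_iInter
  intro v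
  have : {w : ℤ → Fin 2 | ¬ IsFactorZ v.1 w} = {w : ℤ → Fin 2 | IsFactorZ v.1 w}ᶜ := rfl
  rw [this, isClosed_compl_iff]
  have : {w : ℤ → Fin 2 | IsFactorZ v.1 w}
      = ⋃ i : ℤ, ⋂ k ∈ Finset.range v.1.length, {w : ℤ → Fin 2 | w (i + (k : ℤ)) = v.1.getD k 0} := by
    ext w
    simp only [Set.mem_setOf_eq, Set.mem_iUnion, Set.mem_iInter, IsFactorZ, Finset.mem_range]
  rw [this]
  apply isOpen_iUnion
  intro i
  apply isOpen_biInter_finset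
  intro k _
  have hpre : {w : ℤ → Fin 2 | w (i + (k : ℤ)) = v.1.getD k 0}
      = (fun w : ℤ → Fin 2 => w (i + (k : ℤ))) ⁻¹' {v.1.getD k 0} := rfl
  rw [hpre]
  exact IsOpen.preimage (continuous_apply _) (isOpen_discrete _)

/-- the glued basepoint -/
def w0 : ℤ → Fin 2 := fun n => if 0 ≤ n then tm n.toNat else tm (-n - 1).toNat

lemma tm_two : tm 2 = 1 := by
  have h := tm_two_mul 1; norm_num at h; rw [h, tm_one]
lemma tm_three : tm 3 = 0 := by
  have h := tm_two_mul_add_one 1; norm_num at h; rw [h, tm_one]; decide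
lemma tm_five : tm 5 = 0 := by
  have h := tm_two_mul_add_one 2; norm_num at h; rw [h, tm_two]; decide
lemma tm_six : tm 6 = 0 := by
  have h := tm_two_mul 3; norm_num at h; rw [h, tm_three]

lemma f2_even (k : ℕ) : ((2 * k : ℕ) : Fin 2) = 0 := by
  push_cast
  simp

lemma w0_window (t : ℕ) (j : ℕ) (hj : j < 2 ^ (2 * t + 1)) :
    w0 ((j : ℤ) - ((2 ^ (2 * t) : ℕ) : ℤ)) = tm (5 * 2 ^ (2 * t) + j) := by
  have hpow : 2 ^ (2 * t + 1) = 2 * 2 ^ (2 * t) := by ring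
  by_cases hcase : j < 2 ^ (2 * t)
  · have hneg : ¬ (0 ≤ (j : ℤ) - ((2 ^ (2 * t) : ℕ) : ℤ)) := by omega
    unfold w0
    rw [if_neg hneg]
    have harg : (-((j : ℤ) - ((2 ^ (2 * t) : ℕ) : ℤ)) - 1).toNat = 2 ^ (2 * t) - 1 - j := by omega
    rw [harg, tm_reflect (2 * t) j hcase, tm_block (2 * t) 5 j hcase, tm_five, f2_even t,
      zero_add, add_zero]
  · have hpos : (0 ≤ (j : ℤ) - ((2 ^ (2 * t) : ℕ) : ℤ)) := by omega
    unfold w0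
    rw [if_pos hpos]
    have harg : ((j : ℤ) - ((2 ^ (2 * t) : ℕ) : ℤ)).toNat = j - 2 ^ (2 * t) := by omega
    rw [harg, show 5 * 2 ^ (2 * t) + j = 6 * 2 ^ (2 * t) + (j - 2 ^ (2 * t)) by omega,
      tm_block (2 * t) 6 _ (by omega), tm_six, zero_add]

lemma w0_mem : w0 ∈ Omega := by
  rintro v ⟨i, hv⟩
  set L := v.length with hL
  rcases le_or_gt 0 i with hi | hi
  · apply factor_of_tm_window v i.toNat
    intro k hk
    rw [← hv k hk]
    unfold w0
    rw [if_pos (by omega)]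
    congr 1
    omega
  · set t : ℕ := i.natAbs + L with ht
    have hlt : t < 2 ^ t := Nat.lt_two_pow_self
    have hmono : 2 ^ t ≤ 2 ^ (2 * t) := Nat.pow_le_pow_right (by norm_num) (by omega)
    have h2t : i.natAbs + L ≤ 2 ^ (2 * t) := by omega
    have hpow : 2 ^ (2 * t + 1) = 2 * 2 ^ (2 * t) := by ring
    set o : ℕ := 5 * 2 ^ (2 * t) + (i + ((2 ^ (2 * t) : ℕ) : ℤ)).toNat with ho
    apply factor_of_tm_window v o
    intro k hk
    rw [← hv k hk]
    set j' : ℕ := (i + ((2 ^ (2 * t) : ℕ) : ℤ)).toNat + k with hj'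
    have hjlt : j' < 2 ^ (2 * t + 1) := by omega
    have hwin := w0_window t j' hjlt
    rw [show ((j' : ℕ) : ℤ) - ((2 ^ (2 * t) : ℕ) : ℤ) = i + (k : ℤ) by omega] at hwin
    rw [hwin, ho]
    congr 1
    omega

lemma pi_shift_iter (n : ℕ) : piTM (shiftZ^[n] w0) = piTM w0 + n := by
  induction n with
  | zero => simp
  | succ n ih =>
    have hmem : shiftZ^[n] w0 ∈ Omega := by
      clear ih
      induction n with
      | zero => exact w0_mem
      | succ n ih2 => rw [Function.iterate_succ_apply']; exact shiftZ_mem ih2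
    rw [Function.iterate_succ_apply', pi_shift hmem, ih]
    push_cast
    ring

lemma shiftZ_iter_mem (n : ℕ) : shiftZ^[n] w0 ∈ Omega := by
  induction n with
  | zero => exact w0_mem
  | succ n ih => rw [Function.iterate_succ_apply']; exact shiftZ_mem ih

lemma surj_piTM : Set.univ ⊆ piTM '' Omega := by
  have hcompact : IsCompact (piTM '' Omega) :=
    (isClosed_Omega.isCompact).image continuous_piTM
  have hclosed : IsClosed (piTM '' Omega) := hcompact.isClosed
  have hsub : Set.range (fun n : ℕ => piTM w0 + n) ⊆ piTM '' Omega := by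
    rintro z ⟨n, rfl⟩
    exact ⟨shiftZ^[n] w0, shiftZ_iter_mem n, pi_shift_iter n⟩
  have hdense : DenseRange (fun n : ℕ => piTM w0 + n) := by
    have h1 : DenseRange ((fun z : ℤ_[2] => piTM w0 + z) ∘ (fun n : ℕ => (n : ℤ_[2]))) := by
      apply DenseRange.comp
      · exact (Homeomorph.addLeft (piTM w0)).surjective.denseRange
      · exact PadicInt.denseRange_natCast
      · exact (Homeomorph.addLeft (piTM w0)).continuous
    exact h1
  intro z _
  have : z ∈ closure (Set.range (fun n : ℕ => piTM w0 + n)) := hdense z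
  exact hclosed.closure_subset ((closure_mono hsub) this)

lemma eq_zero_of_norm_le_pow {x : ℤ_[2]} (h : ∀ k : ℕ, ‖x‖ ≤ (1/2 : ℝ) ^ k) : x = 0 := by
  have h0 : ‖x‖ ≤ 0 := by
    apply ge_of_tendsto' (tendsto_pow_atTop_nhds_zero_of_lt_one (by norm_num : (0:ℝ) ≤ 1/2)
      (by norm_num))
    exact h
  rwa [← norm_le_zero_iff]

lemma half_pow_eq (k : ℕ) : (1/2 : ℝ) ^ k = (2 : ℝ) ^ (-(k:ℤ)) := by
  rw [zpow_neg, zpow_natCast, one_div, inv_pow]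

lemma mzf_succ (w : ℤ → Fin 2) (k : ℕ) : mzf w (k+1) = mzf w k + bseq w k * 2 ^ k :=
  Finset.sum_range_succ _ _

lemma mzf_mono (w : ℤ → Fin 2) {k k' : ℕ} (h : k ≤ k') : mzf w k ≤ mzf w k' :=
  Finset.sum_le_sum_of_subset (Finset.range_subset_range.mpr h)

lemma mzf_eq_of_pi_eq {v w : ℤ → Fin 2} (h : piTM v = piTM w) (k : ℕ) :
    mzf v k = mzf w k := by
  have h1 : ‖((mzf v k : ℤ_[2])) - (mzf w k : ℤ_[2])‖ ≤ (1/2 : ℝ) ^ k := by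
    have e : ((mzf v k : ℤ_[2])) - (mzf w k : ℤ_[2])
        = ((mzf v k : ℤ_[2]) - piTM v) + (piTM w - (mzf w k : ℤ_[2])) := by
      rw [h]; ring
    rw [e]
    refine le_trans (PadicInt.nonarchimedean _ _) (max_le ?_ ?_)
    · rw [norm_sub_rev]; exact pi_dist v k
    · exact pi_dist w k
  have h2 : (((mzf v k : ℤ) - (mzf w k : ℤ) : ℤ) : ℤ_[2])
      = ((mzf v k : ℤ_[2])) - (mzf w k : ℤ_[2]) := by push_cast; ring
  rw [← h2, half_pow_eq] at h1
  have h3 : ((2:ℕ) ^ k : ℤ) ∣ ((mzf v k : ℤ) - (mzf w k : ℤ)) := by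
    have := (PadicInt.norm_int_le_pow_iff_dvd (p := 2)).mp (by exact_mod_cast h1)
    exact_mod_cast this
  have h4 := mzf_lt v k
  have h5 := mzf_lt w k
  have h6 : ((mzf v k : ℤ) - (mzf w k : ℤ)) = 0 := by
    apply Int.eq_zero_of_abs_lt_dvd h3
    have h4' : (mzf v k : ℤ) < ((2:ℕ) : ℤ) ^ k := by exact_mod_cast h4
    have h5' : (mzf w k : ℤ) < ((2:ℕ) : ℤ) ^ k := by exact_mod_cast h5
    rw [abs_lt]
    constructor <;> omega
  omega

lemma bz_Kc (w : ℤ → Fin 2) : bz (Kc w) = bz w := by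
  unfold bz Kc
  have h : ∀ a b : Fin 2, (1 - a = 1 - b) ↔ (a = b) := by decide
  simp only [h]

lemma Dz_Kc (w : ℤ → Fin 2) : Dz (Kc w) = Kc (Dz w) := by
  funext n
  show Kc w (2 * n - bz (Kc w)) = 1 - w (2 * n - bz w)
  rw [bz_Kc]
  rfl

lemma Dz_iter_Kc (k : ℕ) (w : ℤ → Fin 2) : Dz^[k] (Kc w) = Kc (Dz^[k] w) := by
  induction k generalizing w with
  | zero => rfl
  | succ k ih => rw [Function.iterate_succ_apply, Function.iterate_succ_apply, Dz_Kc, ih]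

lemma bseq_Kc (w : ℤ → Fin 2) (k : ℕ) : bseq (Kc w) k = bseq w k := by
  unfold bseq
  rw [Dz_iter_Kc, bz_Kc]

lemma pi_Kc (w : ℤ → Fin 2) : piTM (Kc w) = piTM w := by
  unfold piTM
  exact tsum_congr fun k => by rw [bseq_Kc]

lemma Kc_ne (w : ℤ → Fin 2) : Kc w ≠ w := by
  intro h
  have h0 : (1 : Fin 2) - w 0 = w 0 := congrFun h 0
  exact f2_ne (w 0) h0.symm

lemma pi_of_ev_zero {w : ℤ → Fin 2} {K : ℕ} (h : ∀ j, K ≤ j → bseq w j = 0) :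
    piTM w = ((mzf w K : ℤ) : ℤ_[2]) := by
  rw [pi_split w K]
  have : ∑' j, ((bseq w (j + K) : ℤ_[2])) * 2 ^ j = 0 := by
    have : ∀ j : ℕ, ((bseq w (j + K) : ℤ_[2])) * 2 ^ j = 0 := by
      intro j
      rw [h (j + K) (by omega)]
      push_cast
      ring
    rw [tsum_congr this, tsum_zero]
  rw [this]
  push_cast
  ring

lemma mzf_linear_zero {w : ℤ → Fin 2} {K : ℕ} (h : ∀ j, K ≤ j → bseq w j = 0) :
    ∀ k, K ≤ k → (mzf w k : ℤ) = 2 ^ k * 0 + (mzf w K : ℤ) := by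
  intro k hk
  induction k with
  | zero =>
    have : K = 0 := by omega
    subst this
    ring
  | succ k ih =>
    rcases Nat.lt_or_ge K (k+1) with h1 | h1
    · have hKk : K ≤ k := by omega
      rw [mzf_succ, h k hKk]
      push_cast
      rw [show ((mzf w k : ℤ)) = 2 ^ k * 0 + (mzf w K : ℤ) from by
        have := ih hKk; push_cast at this ⊢; linarith]
      ring
    · have : K = k + 1 := by omega
      subst this
      ring

lemma mzf_linear_one {w : ℤ → Fin 2} {K : ℕ} (h : ∀ j, K ≤ j → bseq w j = 1) :
    ∀ k, K ≤ k → (mzf w k : ℤ) = 2 ^ k * 1 + ((mzf w K : ℤ) - 2 ^ K) := by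
  intro k hk
  induction k with
  | zero =>
    have : K = 0 := by omega
    subst this
    ring
  | succ k ih =>
    rcases Nat.lt_or_ge K (k+1) with h1 | h1
    · have hKk : K ≤ k := by omega
      have ihk := ih hKk
      rw [mzf_succ, h k hKk]
      push_cast at ihk ⊢
      rw [show ((mzf w k : ℤ)) = 2 ^ k + ((mzf w K : ℤ) - 2 ^ K) from by linarith]
      ring
    · have : K = k + 1 := by omega
      subst this
      ring

lemma pi_of_ev_one {w : ℤ → Fin 2} {K : ℕ} (h : ∀ j, K ≤ j → bseq w j = 1) :
    piTM w = (((mzf w K : ℤ) - 2 ^ K : ℤ) : ℤ_[2]) := by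
  have hlin := mzf_linear_one h
  have key : ∀ k : ℕ, ‖piTM w - (((mzf w K : ℤ) - 2 ^ K : ℤ) : ℤ_[2])‖ ≤ (1/2 : ℝ) ^ k := by
    intro k
    set k' : ℕ := max k K with hk'
    have hKk : K ≤ k' := le_max_right _ _
    have hkk : k ≤ k' := le_max_left _ _
    have e : piTM w - (((mzf w K : ℤ) - 2 ^ K : ℤ) : ℤ_[2])
        = (piTM w - (mzf w k' : ℤ_[2])) + ((mzf w k' : ℤ_[2]) - (((mzf w K : ℤ) - 2 ^ K : ℤ) : ℤ_[2])) := by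
      ring
    have h2 : ((mzf w k' : ℤ_[2])) - (((mzf w K : ℤ) - 2 ^ K : ℤ) : ℤ_[2]) = 2 ^ k' := by
      have := hlin k' hKk
      have hcast : ((mzf w k' : ℤ) : ℤ_[2]) = (mzf w k' : ℤ_[2]) := by push_cast; ring
      calc ((mzf w k' : ℤ_[2])) - (((mzf w K : ℤ) - 2 ^ K : ℤ) : ℤ_[2])
          = (((mzf w k' : ℤ) - ((mzf w K : ℤ) - 2 ^ K) : ℤ) : ℤ_[2]) := by push_cast; ring
        _ = ((2 ^ k' * 1 : ℤ) : ℤ_[2]) := by rw [show ((mzf w k' : ℤ) - ((mzf w K : ℤ) - 2 ^ K) : ℤ) = 2 ^ k' * 1 from by linarith]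
        _ = 2 ^ k' := by push_cast; ring
    rw [e, h2]
    calc ‖(piTM w - (mzf w k' : ℤ_[2])) + 2 ^ k'‖
        ≤ max ‖piTM w - (mzf w k' : ℤ_[2])‖ ‖(2 : ℤ_[2]) ^ k'‖ := PadicInt.nonarchimedean _ _
      _ ≤ (1/2 : ℝ) ^ k' := max_le (pi_dist w k') (norm_two_pow_le k')
      _ ≤ (1/2 : ℝ) ^ k := pow_le_pow_of_le_one (by norm_num) (by norm_num) hkk
  have := eq_zero_of_norm_le_pow key
  linear_combination this

lemma f2_cases (x : Fin 2) : x = 0 ∨ x = 1 := by revert x; decide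

lemma fiber_subset_pair {z : ℤ_[2]} {w : ℤ → Fin 2} (hwO : w ∈ Omega) (hwz : piTM w = z)
    (hA : ∀ K : ℕ, ∃ j, K ≤ j ∧ bseq w j = 1) (hB : ∀ K : ℕ, ∃ j, K ≤ j ∧ bseq w j = 0) :
    Omega ∩ piTM ⁻¹' {z} ⊆ {w, Kc w} := by
  have hk : ∀ N : ℕ, ∃ k, N ≤ mzf w k ∧ mzf w k + N ≤ 2 ^ k := by
    intro N
    obtain ⟨j₁, hj₁, hb₁⟩ := hA N
    obtain ⟨j₂, hj₂, hb₂⟩ := hB (j₁ + 1 + N)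
    have hm1 : 2 ^ j₁ ≤ mzf w (j₁ + 1) := by rw [mzf_succ, hb₁]; omega
    have hmono : mzf w (j₁ + 1) ≤ mzf w (j₂ + 1) := mzf_mono w (by omega)
    have hN1 : N < 2 ^ N := Nat.lt_two_pow_self
    have hN2 : 2 ^ N ≤ 2 ^ j₁ := Nat.pow_le_pow_right (by norm_num) hj₁
    have hs : mzf w (j₂ + 1) = mzf w j₂ := by rw [mzf_succ, hb₂]; omega
    have hlt := mzf_lt w j₂
    have hN3 : 2 ^ N ≤ 2 ^ j₂ := Nat.pow_le_pow_right (by norm_num) (by omega)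
    have hp : 2 ^ (j₂ + 1) = 2 * 2 ^ j₂ := by ring
    exact ⟨j₂ + 1, by omega, by omega⟩
  rintro w' ⟨hw'O, hw'z⟩
  have hw'z' : piTM w' = z := hw'z
  have hmz : ∀ k, mzf w' k = mzf w k := fun k => mzf_eq_of_pi_eq (by rw [hw'z', hwz]) k
  have key : ∀ n : ℤ, w' n + w n = w' 0 + w 0 := by
    intro n
    obtain ⟨k, hk1, hk2⟩ := hk (n.natAbs + 1)
    obtain ⟨r, hr1, hr2⟩ : ∃ r : ℕ, (r : ℤ) = n + (mzf w k : ℤ) ∧ r < 2 ^ k :=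
      ⟨(n + (mzf w k : ℤ)).toNat, by omega, by omega⟩
    have e1 : w n = Dz^[k] w 0 + tm r := by
      have h := fiber_window hwO k 0 r hr2
      rwa [show (2 ^ k : ℤ) * 0 + (r : ℤ) - (mzf w k : ℤ) = n by omega] at h
    have e1' : w' n = Dz^[k] w' 0 + tm r := by
      have h := fiber_window hw'O k 0 r hr2
      rw [hmz k] at h
      rwa [show (2 ^ k : ℤ) * 0 + (r : ℤ) - (mzf w k : ℤ) = n by omega] at h
    have e0 : w 0 = Dz^[k] w 0 + tm (mzf w k) := by
      have h := fiber_window hwO k 0 (mzf w k) (mzf_lt w k)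
      rwa [show (2 ^ k : ℤ) * 0 + ((mzf w k : ℕ) : ℤ) - (mzf w k : ℤ) = 0 by omega] at h
    have e0' : w' 0 = Dz^[k] w' 0 + tm (mzf w k) := by
      have h := fiber_window hw'O k 0 (mzf w k) (mzf_lt w k)
      rw [hmz k] at h
      rwa [show (2 ^ k : ℤ) * 0 + ((mzf w k : ℕ) : ℤ) - (mzf w k : ℤ) = 0 by omega] at h
    rw [e1, e1', e0, e0']
    generalize Dz^[k] w' 0 = A'
    generalize Dz^[k] w 0 = A
    generalize tm r = t
    generalize tm (mzf w k) = t₀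
    revert A' A t t₀; decide
  rw [Set.mem_insert_iff, Set.mem_singleton_iff]
  by_cases h0 : w' 0 = w 0
  · left
    funext n
    have hkey := key n
    rw [h0] at hkey
    revert hkey
    generalize w' n = a
    generalize w n = b
    generalize w 0 = c
    revert a b c; decide
  · right
    funext n
    show w' n = 1 - w n
    have hkey := key n
    revert hkey h0
    generalize w' n = a
    generalize w n = b
    generalize w' 0 = c
    generalize w 0 = d
    revert a b c d; decide

lemma fiber_eq_boundary {z : ℤ_[2]} {w : ℤ → Fin 2} (hwO : w ∈ Omega) (hwz : piTM w = z)
    (K : ℕ) (c d : ℤ) (hc : ∀ k, K ≤ k → (mzf w k : ℤ) = 2 ^ k * c + d) :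
    ∀ w', w' ∈ Omega ∩ piTM ⁻¹' {z} → ∀ n : ℤ,
      w' n = if -d ≤ n then w' (-d) + tm (n + d).toNat
             else w' (-d - 1) + tm (-(n + d) - 1).toNat := by
  rintro w' ⟨hw'O, hw'z⟩ n
  have hw'z' : piTM w' = z := hw'z
  have hmz : ∀ k, mzf w' k = mzf w k := fun k => mzf_eq_of_pi_eq (by rw [hw'z', hwz]) k
  set k : ℕ := 2 * (K + (n + d).natAbs + 1) with hkdef
  have hkK : K ≤ k := by omega
  have hklin : (mzf w' k : ℤ) = 2 ^ k * c + d := by rw [hmz k]; exact hc k hkK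
  have hpow : (n + d).natAbs + 1 < 2 ^ k := by
    calc (n + d).natAbs + 1 ≤ k := by omega
      _ < 2 ^ k := Nat.lt_two_pow_self
  have hkeven : ((k : ℕ) : Fin 2) = 0 := by rw [hkdef]; exact f2_even _
  have hcast : ((2 ^ k : ℕ) : ℤ) = (2 ^ k : ℤ) := by push_cast; ring
  by_cases hn : -d ≤ n
  · rw [if_pos hn]
    set r : ℕ := (n + d).toNat with hrdef
    have hr2 : r < 2 ^ k := by omega
    have e1 : w' n = Dz^[k] w' c + tm r := by
      have h := fiber_window hw'O k c r hr2
      rwa [show (2 ^ k : ℤ) * c + (r : ℤ) - (mzf w' k : ℤ) = n by omega] at h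
    have e0 : w' (-d) = Dz^[k] w' c := by
      have h0 := fiber_window hw'O k c 0 (by positivity)
      rw [show (2 ^ k : ℤ) * c + ((0 : ℕ) : ℤ) - (mzf w' k : ℤ) = -d by omega] at h0
      rw [tm_zero, add_zero] at h0
      exact h0
    rw [e1, e0]
  · rw [if_neg hn]
    set s : ℕ := (-(n + d)).toNat with hsdef
    have hs1 : 1 ≤ s := by omega
    have hs2 : s ≤ 2 ^ k := by omega
    set r : ℕ := 2 ^ k - s with hrdef
    have hr2 : r < 2 ^ k := by omega
    have hexp : (2 ^ k : ℤ) * (c - 1) = 2 ^ k * c - 2 ^ k := by ring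
    have e1 : w' n = Dz^[k] w' (c - 1) + tm r := by
      have h := fiber_window hw'O k (c - 1) r hr2
      rwa [show (2 ^ k : ℤ) * (c - 1) + (r : ℤ) - (mzf w' k : ℤ) = n by omega] at h
    have htmr : tm r = tm ((-(n + d) - 1).toNat) := by
      have hs3 : s - 1 < 2 ^ k := by omega
      have hre : r = 2 ^ k - 1 - (s - 1) := by omega
      rw [hre, tm_reflect k (s - 1) hs3, hkeven, add_zero]
      congr 1
      omega
    have e0 : w' (-d - 1) = Dz^[k] w' (c - 1) := by
      have h0 := fiber_window hw'O k (c - 1) (2 ^ k - 1) (by omega)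
      rw [show (2 ^ k : ℤ) * (c - 1) + (((2 ^ k - 1 : ℕ)) : ℤ) - (mzf w' k : ℤ) = -d - 1 by omega] at h0
      have htm0 : tm (2 ^ k - 1) = 0 := by
        have h1 := tm_reflect k 0 (by positivity)
        rw [tm_zero, zero_add, hkeven] at h1
        simpa using h1
      rw [htm0, add_zero] at h0
      exact h0
    rw [e1, e0, htmr]

lemma encard_le_four_of_boundary {z : ℤ_[2]} {w : ℤ → Fin 2} (hwO : w ∈ Omega)
    (hwz : piTM w = z) (K : ℕ) (c d : ℤ)
    (hc : ∀ k, K ≤ k → (mzf w k : ℤ) = 2 ^ k * c + d) :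
    (Omega ∩ piTM ⁻¹' {z}).encard ≤ 4 := by
  set G : Fin 2 → Fin 2 → (ℤ → Fin 2) := fun a b => fun n =>
    if -d ≤ n then a + tm (n + d).toNat else b + tm (-(n + d) - 1).toNat with hG
  have hsub : Omega ∩ piTM ⁻¹' {z} ⊆ {G 0 0, G 0 1, G 1 0, G 1 1} := by
    intro w' hw'
    have hval := fiber_eq_boundary hwO hwz K c d hc w' hw'
    have hrepr : w' = G (w' (-d)) (w' (-d - 1)) := by
      funext n
      rw [hval n, hG]
    rcases f2_cases (w' (-d)) with h1 | h1 <;> rcases f2_cases (w' (-d - 1)) with h2 | h2 <;>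
      rw [h1, h2] at hrepr <;> simp [hrepr, Set.mem_insert_iff]
  have h4 : ({G 0 0, G 0 1, G 1 0, G 1 1} : Set (ℤ → Fin 2)).encard ≤ 4 := by
    refine le_trans (Set.encard_insert_le _ _) ?_
    refine le_trans (add_le_add_left (Set.encard_insert_le _ _) 1) ?_
    refine le_trans (add_le_add_left (add_le_add_left (Set.encard_insert_le _ _) 1) 1) ?_
    rw [Set.encard_singleton]
    norm_num
  exact le_trans (Set.encard_mono hsub) h4

theorem factor_map_fibers :
    ∃ π : (ℤ → Fin 2) → ℤ_[2],
      ContinuousOn π Omega ∧ Set.SurjOn π Omega Set.univ ∧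
      (∀ w ∈ Omega, π (shiftZ w) = π w + 1) ∧
      (∀ z : ℤ_[2], (Omega ∩ π ⁻¹' {z}).encard ≤ 4) ∧
      (∀ z : ℤ_[2], z ∉ Set.range ((↑·) : ℤ → ℤ_[2]) →
        (Omega ∩ π ⁻¹' {z}).encard = 2) := by
  refine ⟨piTM, continuous_piTM.continuousOn, surj_piTM, fun w hw => pi_shift hw, ?_, ?_⟩
  · intro z
    rcases Set.eq_empty_or_nonempty (Omega ∩ piTM ⁻¹' {z}) with he | ⟨w, hwO, hwz⟩
    · rw [he, Set.encard_empty]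
      exact zero_le
    · have hwz' : piTM w = z := hwz
      by_cases hA : ∃ K, ∀ j, K ≤ j → bseq w j = 0
      · obtain ⟨K, hK⟩ := hA
        exact encard_le_four_of_boundary hwO hwz' K 0 (mzf w K) (mzf_linear_zero hK)
      · by_cases hB : ∃ K, ∀ j, K ≤ j → bseq w j = 1
        · obtain ⟨K, hK⟩ := hB
          exact encard_le_four_of_boundary hwO hwz' K 1 ((mzf w K : ℤ) - 2 ^ K)
            (mzf_linear_one hK)
        · push_neg at hA hB
          have hA' : ∀ K : ℕ, ∃ j, K ≤ j ∧ bseq w j = 1 := by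
            intro K
            obtain ⟨j, h1, h2⟩ := hA K
            exact ⟨j, h1, by have := bseq_le w j; omega⟩
          have hB' : ∀ K : ℕ, ∃ j, K ≤ j ∧ bseq w j = 0 := by
            intro K
            obtain ⟨j, h1, h2⟩ := hB K
            exact ⟨j, h1, by have := bseq_le w j; omega⟩
          have hsub := fiber_subset_pair hwO hwz' hA' hB'
          have h2 : ({w, Kc w} : Set (ℤ → Fin 2)).encard ≤ 4 := by
            refine le_trans (Set.encard_insert_le _ _) ?_
            rw [Set.encard_singleton]
            norm_num
          exact le_trans (Set.encard_mono hsub) h2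
  · intro z hz
    obtain ⟨w, hwO, hwz'⟩ := surj_piTM (Set.mem_univ z)
    have hA' : ∀ K : ℕ, ∃ j, K ≤ j ∧ bseq w j = 1 := by
      intro K
      by_contra hc
      push_neg at hc
      have h0 : ∀ j, K ≤ j → bseq w j = 0 := by
        intro j hj
        have hb := bseq_le w j
        have := hc j hj
        omega
      refine hz ⟨(mzf w K : ℤ), ?_⟩
      show ((mzf w K : ℤ) : ℤ_[2]) = z
      rw [← pi_of_ev_zero h0, hwz']
    have hB' : ∀ K : ℕ, ∃ j, K ≤ j ∧ bseq w j = 0 := by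
      intro K
      by_contra hc
      push_neg at hc
      have h1 : ∀ j, K ≤ j → bseq w j = 1 := by
        intro j hj
        have hb := bseq_le w j
        have := hc j hj
        omega
      refine hz ⟨(mzf w K : ℤ) - 2 ^ K, ?_⟩
      show (((mzf w K : ℤ) - 2 ^ K : ℤ) : ℤ_[2]) = z
      rw [← pi_of_ev_one h1, hwz']
    have hsub := fiber_subset_pair hwO hwz' hA' hB'
    have hsup : ({w, Kc w} : Set (ℤ → Fin 2)) ⊆ Omega ∩ piTM ⁻¹' {z} := by
      intro x hx
      simp only [Set.mem_insert_iff, Set.mem_singleton_iff] at hx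
      rcases hx with rfl | rfl
      · exact ⟨hwO, hwz'⟩
      · exact ⟨Kc_mem hwO, show piTM (Kc w) = z by rw [pi_Kc, hwz']⟩
    rw [Set.Subset.antisymm hsub hsup, Set.encard_pair (Ne.symm (Kc_ne w))]
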